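/- Any two orderings P and P' of the edges of a noncrossing tree T on [n] that both respect T are related by a sequence of adjacent swaps of consecutive edges that are vertex-disjoint (commuting moves). -/

import Mathlib

/-- A graph on `Fin n` is noncrossing if it has no pair of edges `{a,c}` and `{b,d}`
with `a < b < c < d`. -/
def Noncrossing {n : ℕ} (G : SimpleGraph (Fin n)) : Prop :=
  ∀ a b c d : Fin n, a < b → b < c → c < d → G.Adj a c → G.Adj b d → False

/-- In the standard drawing of a noncrossing graph (vertices on a line, arcs above),
the neighbor `k` of `v` comes strictly before the neighbor `k'` of `v` in the clockwise
order of the arcs at `v`: the arcs to smaller neighbors come first in decreasing order,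
followed by the arcs to larger neighbors in decreasing order. -/
def CwBefore {n : ℕ} (v k k' : Fin n) : Prop :=
  (k < v ∧ k' < v ∧ k' < k) ∨ (k < v ∧ v < k') ∨ (v < k ∧ v < k' ∧ k' < k)

/-- The endpoint of the edge `p` other than `v`. -/
def otherEnd {n : ℕ} (p : Fin n × Fin n) (v : Fin n) : Fin n :=
  if p.1 = v then p.2 else p.1

/-- The word `L` of edges respects the drawing: for every vertex `v`, the edges incident
to `v` occur in `L` in their clockwise order around `v`. -/
def Respects {n : ℕ} (L : List (Fin n × Fin n)) : Prop :=
  ∀ a b : Fin L.length, a < b → ∀ v : Fin n,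
    ((L.get a).1 = v ∨ (L.get a).2 = v) → ((L.get b).1 = v ∨ (L.get b).2 = v) →
    CwBefore v (otherEnd (L.get a) v) (otherEnd (L.get b) v)

/-- One commuting move: swap two adjacent edges in the word that share no vertex. -/
def CommMove {n : ℕ} (L L' : List (Fin n × Fin n)) : Prop :=
  ∃ (l₁ l₂ : List (Fin n × Fin n)) (a b : Fin n × Fin n),
    a.1 ≠ b.1 ∧ a.1 ≠ b.2 ∧ a.2 ≠ b.1 ∧ a.2 ≠ b.2 ∧
    L = l₁ ++ a :: b :: l₂ ∧ L' = l₁ ++ b :: a :: l₂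


open List

section General
variable {α : Type*} (Sh : α → α → Prop) (Move : List α → List α → Prop)

lemma bubble_aux (hmove : ∀ (l : List α) (a b : α), ¬ Sh a b → Move (a :: b :: l) (b :: a :: l))
    (hcons : ∀ (x : α) (u w : List α), Move u w → Move (x :: u) (x :: w)) :
    ∀ (s t : List α) (a : α), (∀ x ∈ s, ¬ Sh x a) →
      Relation.ReflTransGen Move (s ++ a :: t) (a :: (s ++ t)) := by
  intro s
  induction s with
  | nil => intro t a _; exact .refl
  | cons x s' ih =>
      intro t a hx
      have h1 := ih t a (fun z hz => hx z (List.mem_cons_of_mem _ hz))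
      have h2 : Relation.ReflTransGen Move (x :: (s' ++ a :: t)) (x :: a :: (s' ++ t)) :=
        Relation.ReflTransGen.lift (fun l => x :: l) (fun u w h => hcons x u w h) _ _ h1
      have h3 : Move (x :: a :: (s' ++ t)) (a :: x :: (s' ++ t)) :=
        hmove _ x a (hx x (List.mem_cons_self))
      exact h2.tail h3

lemma comm_main (hSh : Symmetric Sh)
    (hmove : ∀ (l : List α) (a b : α), ¬ Sh a b → Move (a :: b :: l) (b :: a :: l))
    (hcons : ∀ (x : α) (u w : List α), Move u w → Move (x :: u) (x :: w))
    (hsymm : Symmetric Move) :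
    ∀ (L L' : List α), L.Nodup → L.Perm L' →
      (∀ x y, Sh x y → [x, y] <+ L → [y, x] <+ L' → False) →
      Relation.ReflTransGen Move L L' := by
  intro L
  induction L with
  | nil =>
      intro L' _ hp _
      rw [hp.symm.eq_nil]
  | cons a rest ih =>
      intro L' hnd hp hord
      have haL' : a ∈ L' := hp.mem_iff.mp (List.mem_cons_self)
      obtain ⟨s, t, rfl⟩ := List.append_of_mem haL'
      have hnd' : (s ++ a :: t).Nodup := hp.nodup hnd
      have hanotin : a ∉ s := by
        rw [List.nodup_middle, List.nodup_cons] at hnd'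
        exact fun h => hnd'.1 (List.mem_append_left _ h)
      have hcond : ∀ x ∈ s, ¬ Sh x a := by
        intro x hx hShx
        have hxa : x ≠ a := fun h => hanotin (h ▸ hx)
        have hxL : x ∈ a :: rest := hp.symm.mem_iff.mp (List.mem_append_left _ hx)
        have hxrest : x ∈ rest := by
          rcases List.mem_cons.mp hxL with h | h
          · exact absurd h hxa
          · exact h
        have h1 : [a, x] <+ a :: rest := (List.singleton_sublist.mpr hxrest).cons₂ a
        have h2 : [x, a] <+ s ++ a :: t := by
          have : [x] ++ [a] <+ s ++ a :: t :=
            (List.singleton_sublist.mpr hx).append (by simp)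
          simpa using this
        exact hord a x (hSh hShx) h1 h2
      have hb : Relation.ReflTransGen Move (s ++ a :: t) (a :: (s ++ t)) :=
        bubble_aux Sh Move hmove hcons s t a hcond
      have hperm2 : rest.Perm (s ++ t) :=
        (hp.trans List.perm_middle).cons_inv
      have hih : Relation.ReflTransGen Move rest (s ++ t) := by
        apply ih (s ++ t) (List.Nodup.of_cons hnd) hperm2
        intro x y hxy h1 h2
        refine hord x y hxy (h1.cons a) (h2.trans ?_)
        exact List.Sublist.append_left (List.sublist_cons_self a t) s
      have hlift : Relation.ReflTransGen Move (a :: rest) (a :: (s ++ t)) :=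
        Relation.ReflTransGen.lift (fun l => a :: l) (fun u w h => hcons a u w h) _ _ hih
      haveI : Std.Symm Move := ⟨fun u w h => hsymm h⟩
      exact hlift.trans (Std.Symm.symm _ _ hb)

end General

lemma pair_sublist_index {α : Type*} {x y : α} :
    ∀ {L : List α}, [x, y] <+ L →
      ∃ i j : Fin L.length, i < j ∧ L.get i = x ∧ L.get j = y := by
  intro L
  induction L with
  | nil => intro h; simp at h
  | cons a t ih =>
      intro h
      cases h with
      | cons _ h' =>
          obtain ⟨i, j, hij, hx, hy⟩ := ih h'
          exact ⟨i.succ, j.succ, by simpa using hij, by simpa using hx, by simpa using hy⟩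
      | cons_cons _ h' =>
          have hyt : y ∈ t := List.singleton_sublist.mp h'
          obtain ⟨j, hj⟩ := List.mem_iff_get.mp hyt
          exact ⟨⟨0, by simp⟩, j.succ, by simp [Fin.lt_def], rfl, by simpa using hj⟩

lemma cw_asym {n : ℕ} {v k k' : Fin n} (h : CwBefore v k k') (h' : CwBefore v k' k) : False := by
  simp only [CwBefore, Fin.lt_def] at h h'
  omega

lemma respects_ord {n : ℕ} {L : List (Fin n × Fin n)} (hresp : Respects L)
    {x y : Fin n × Fin n} {v : Fin n} (hx : x.1 = v ∨ x.2 = v) (hy : y.1 = v ∨ y.2 = v)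
    (h : [x, y] <+ L) : CwBefore v (otherEnd x v) (otherEnd y v) := by
  obtain ⟨i, j, hij, hxi, hyj⟩ := pair_sublist_index h
  have := hresp i j hij v (by rw [hxi]; exact hx) (by rw [hyj]; exact hy)
  rwa [hxi, hyj] at this

/-- Any two orderings of the edges of a noncrossing tree `T` on `[n]` that both respect
`T` are related by a sequence of adjacent swaps of vertex-disjoint consecutive edges. -/
theorem respects_related_by_comm_moves {n : ℕ} (T : SimpleGraph (Fin n))
    (hT : T.IsTree) (hnc : Noncrossing T) (L L' : List (Fin n × Fin n))
    (hedges : ∀ p ∈ L, p.1 < p.2 ∧ T.Adj p.1 p.2)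
    (hedges' : ∀ p ∈ L', p.1 < p.2 ∧ T.Adj p.1 p.2)
    (hnodup : (L.map fun p => Sym2.mk p.1 p.2).Nodup)
    (hnodup' : (L'.map fun p => Sym2.mk p.1 p.2).Nodup)
    (hall : ∀ e, e ∈ T.edgeSet ↔ ∃ p ∈ L, e = Sym2.mk p.1 p.2)
    (hall' : ∀ e, e ∈ T.edgeSet ↔ ∃ p ∈ L', e = Sym2.mk p.1 p.2)
    (hresp : Respects L) (hresp' : Respects L') :
    Relation.ReflTransGen CommMove L L' := by
  classical
  set Sh : (Fin n × Fin n) → (Fin n × Fin n) → Prop :=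
    fun p q => p.1 = q.1 ∨ p.1 = q.2 ∨ p.2 = q.1 ∨ p.2 = q.2 with hShdef
  have hSh : Symmetric Sh := by
    intro p q h; simp only [hShdef] at *; tauto
  have hmove : ∀ (l : List (Fin n × Fin n)) (a b : Fin n × Fin n), ¬ Sh a b →
      CommMove (a :: b :: l) (b :: a :: l) := by
    intro l a b h
    simp only [hShdef, not_or] at h
    exact ⟨[], l, a, b, h.1, h.2.1, h.2.2.1, h.2.2.2, rfl, rfl⟩
  have hcons : ∀ (x : Fin n × Fin n) (u w : List (Fin n × Fin n)), CommMove u w →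
      CommMove (x :: u) (x :: w) := by
    rintro x u w ⟨l₁, l₂, a, b, h1, h2, h3, h4, rfl, rfl⟩
    exact ⟨x :: l₁, l₂, a, b, h1, h2, h3, h4, rfl, rfl⟩
  have hsymm : Symmetric (CommMove (n := n)) := by
    rintro u w ⟨l₁, l₂, a, b, h1, h2, h3, h4, rfl, rfl⟩
    exact ⟨l₁, l₂, b, a, h1.symm, h3.symm, h2.symm, h4.symm, rfl, rfl⟩
  have hmemtrans : ∀ (M M' : List (Fin n × Fin n)),
      (∀ p ∈ M, p.1 < p.2 ∧ T.Adj p.1 p.2) →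
      (∀ p ∈ M', p.1 < p.2 ∧ T.Adj p.1 p.2) →
      (∀ e, e ∈ T.edgeSet ↔ ∃ p ∈ M', e = Sym2.mk p.1 p.2) →
      ∀ p ∈ M, p ∈ M' := by
    intro M M' hM hM' hA p hp
    have hadj : Sym2.mk p.1 p.2 ∈ T.edgeSet := (hM p hp).2
    obtain ⟨q, hq, he⟩ := (hA _).mp hadj
    rcases Sym2.eq_iff.mp he with ⟨h1, h2⟩ | ⟨h1, h2⟩
    · have : p = q := Prod.ext h1 h2
      rw [this]; exact hq
    · exfalso
      have ha := (hM p hp).1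
      have hb := (hM' q hq).1
      rw [h1, h2] at ha
      exact lt_asymm ha hb
  have hndL : L.Nodup := List.Nodup.of_map _ hnodup
  have hndL' : L'.Nodup := List.Nodup.of_map _ hnodup'
  have hperm : L.Perm L' := by
    rw [List.perm_ext_iff_of_nodup hndL hndL']
    intro p
    exact ⟨hmemtrans L L' hedges hedges' hall' p,
      hmemtrans L' L hedges' hedges hall p⟩
  apply comm_main Sh CommMove hSh hmove hcons hsymm L L' hndL hperm
  intro x y hxy h1 h2
  rcases hxy with h | h | h | h
  · exact cw_asym (respects_ord hresp (Or.inl h) (Or.inl rfl) h1)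
      (respects_ord hresp' (Or.inl rfl) (Or.inl h) h2)
  · exact cw_asym (respects_ord hresp (Or.inl h) (Or.inr rfl) h1)
      (respects_ord hresp' (Or.inr rfl) (Or.inl h) h2)
  · exact cw_asym (respects_ord hresp (Or.inr h) (Or.inl rfl) h1)
      (respects_ord hresp' (Or.inl rfl) (Or.inr h) h2)
  · exact cw_asym (respects_ord hresp (Or.inr h) (Or.inr rfl) h1)
      (respects_ord hresp' (Or.inr rfl) (Or.inr h) h2)
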